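/- Let L = I − M be the normalized Laplacian of an undirected, connected, regular, aperiodic multigraph on n vertices, where M is the random-walk transition matrix. Then L⁺ = (1/2)·(I − J + (I + M)(I − M²)⁺(I + M)), where J is the n×n matrix with every entry equal to 1/n. -/

import Mathlib

open Matrix

/-- Uniqueness of the Moore–Penrose pseudoinverse. -/
lemma mp_unique_aux {n : ℕ} (A X Y : Matrix (Fin n) (Fin n) ℝ)
    (h1 : A * X * A = A) (h2 : X * A * X = X)
    (h3 : (X * A)ᵀ = X * A) (h4 : (A * X)ᵀ = A * X)
    (g1 : A * Y * A = A) (g2 : Y * A * Y = Y)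
    (g3 : (Y * A)ᵀ = Y * A) (g4 : (A * Y)ᵀ = A * Y) :
    X = Y := by
  have hAX : A * X = A * Y := by
    calc A * X = A * Y * A * X := by rw [g1]
    _ = (A * Y) * (A * X) := by rw [Matrix.mul_assoc (A * Y)]
    _ = (A * Y)ᵀ * (A * X)ᵀ := by rw [g4, h4]
    _ = ((A * X) * (A * Y))ᵀ := by rw [← transpose_mul]
    _ = (A * X * A * Y)ᵀ := by rw [Matrix.mul_assoc (A * X)]
    _ = (A * Y)ᵀ := by rw [h1]
    _ = A * Y := g4
  have hXA : X * A = Y * A := by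
    calc X * A = X * (A * Y * A) := by rw [g1]
    _ = (X * A) * (Y * A) := by simp only [Matrix.mul_assoc]
    _ = (X * A)ᵀ * (Y * A)ᵀ := by rw [h3, g3]
    _ = ((Y * A) * (X * A))ᵀ := by rw [← transpose_mul]
    _ = (Y * (A * X * A))ᵀ := by simp only [Matrix.mul_assoc]
    _ = (Y * A)ᵀ := by rw [h1]
    _ = Y * A := g3
  calc X = X * A * X := h2.symm
  _ = Y * A * X := by rw [hXA]
  _ = Y * (A * X) := by rw [Matrix.mul_assoc]
  _ = Y * (A * Y) := by rw [hAX]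
  _ = Y * A * Y := by rw [← Matrix.mul_assoc]
  _ = Y := g2

/-- Peng–Spielman identity: if L = I − M is the normalized Laplacian of a connected,
regular, aperiodic multigraph (M symmetric doubly stochastic, eigenvalue 1 only on the
all-ones vector, −1 not an eigenvalue), then
L⁺ = (1/2)·(I − J + (I + M)(I − M²)⁺(I + M)). -/
theorem laplacian_pseudoinverse_identity {n : ℕ} (hn : 0 < n)
    (M Lp Sp : Matrix (Fin n) (Fin n) ℝ)
    (hMsym : Mᵀ = M)
    (hMnn : ∀ i j, 0 ≤ M i j) (hMrow : ∀ i, ∑ j, M i j = 1)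
    (hpsd : ((1 : Matrix (Fin n) (Fin n) ℝ) - M).PosSemidef)
    (haperiodic : ((1 : Matrix (Fin n) (Fin n) ℝ) + M).PosDef)
    (hker : ∀ v : Fin n → ℝ, ((1 : Matrix (Fin n) (Fin n) ℝ) - M) *ᵥ v = 0 ↔
      ∃ c : ℝ, v = fun _ => c)
    -- Lp is the Moore–Penrose pseudoinverse of L = I − M
    (hp1 : (1 - M) * Lp * (1 - M) = 1 - M) (hp2 : Lp * (1 - M) * Lp = Lp)
    (hp3 : (Lp * (1 - M))ᵀ = Lp * (1 - M)) (hp4 : ((1 - M) * Lp)ᵀ = (1 - M) * Lp)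
    -- Sp is the Moore–Penrose pseudoinverse of I − M²
    (hs1 : (1 - M * M) * Sp * (1 - M * M) = 1 - M * M)
    (hs2 : Sp * (1 - M * M) * Sp = Sp)
    (hs3 : (Sp * (1 - M * M))ᵀ = Sp * (1 - M * M))
    (hs4 : ((1 - M * M) * Sp)ᵀ = (1 - M * M) * Sp)
    (J : Matrix (Fin n) (Fin n) ℝ) (hJ : J = fun _ _ => (1 : ℝ) / n) :
    Lp = (1 / 2 : ℝ) • (1 - J + (1 + M) * Sp * (1 + M)) := by
  have hn0 : (n : ℝ) ≠ 0 := Nat.cast_ne_zero.mpr hn.ne'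
  set S : Matrix (Fin n) (Fin n) ℝ := 1 - M * M with hS
  -- basic facts about J
  have hJsym : Jᵀ = J := by
    rw [hJ]; ext i j; simp [Matrix.transpose_apply]; rfl
  have hJJ : J * J = J := by
    ext i j; rw [Matrix.mul_apply, hJ]
    simp [Matrix.mul_apply, Finset.sum_const, Finset.card_univ]
    field_simp
  have hMJ : M * J = J := by
    ext i j; rw [Matrix.mul_apply, hJ]
    simp only []
    simp_rw [mul_one_div]
    rw [← Finset.sum_div, hMrow i]
  have hJM : J * M = J := by
    ext i j; rw [Matrix.mul_apply, hJ]
    simp only []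
    have hcol : ∑ k, M k j = 1 := by
      have hsw : ∀ k, M k j = M j k := by
        intro k
        have h2 := congrFun (congrFun hMsym j) k
        simpa using h2
      simp_rw [hsw]
      exact hMrow j
    calc ∑ k, (1 : ℝ) / n * M k j = (∑ k, M k j) / n := by
          rw [Finset.sum_div]; congr 1; funext k; ring
    _ = 1 / n := by rw [hcol]
  have hSJ : S * J = 0 := by
    rw [hS, sub_mul, one_mul, Matrix.mul_assoc, hMJ, hMJ, sub_self]
  have hJS : J * S = 0 := by
    rw [hS, mul_sub, mul_one, ← Matrix.mul_assoc, hJM, hJM, sub_self]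
  have hSsym : Sᵀ = S := by
    rw [hS, transpose_sub, transpose_one, transpose_mul, hMsym]
  -- kernel of S consists of constant vectors
  have hSfact : S = (1 + M) * (1 - M) := by
    rw [hS]; noncomm_ring
  have hkerS : ∀ v : Fin n → ℝ, S *ᵥ v = 0 → ∃ c : ℝ, v = fun _ => c := by
    intro v hv
    have h1 : (1 + M) *ᵥ ((1 - M) *ᵥ v) = 0 := by
      rw [Matrix.mulVec_mulVec, ← hSfact]; exact hv
    have h2 : (1 - M) *ᵥ v = 0 := by
      by_contra hne
      have := haperiodic.dotProduct_mulVec_pos hne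
      rw [h1] at this
      simp at this
    exact (hker v).mp h2
  -- key: S*Q = 0 and J*Q = 0 implies Q = 0
  have key : ∀ Q : Matrix (Fin n) (Fin n) ℝ, S * Q = 0 → J * Q = 0 → Q = 0 := by
    intro Q hSQ hJQ
    ext i j
    obtain ⟨c, hc⟩ := hkerS (fun k => Q k j) (by
      funext i'
      have h0 : (S * Q) i' j = 0 := by rw [hSQ]; rfl
      simpa [Matrix.mulVec, dotProduct, Matrix.mul_apply] using h0)
    have hcval : ∀ k, Q k j = c := fun k => congrFun hc k
    have h0 : (J * Q) i j = 0 := by rw [hJQ]; rfl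
    rw [Matrix.mul_apply] at h0
    simp_rw [hcval, hJ] at h0
    rw [Finset.sum_const, Finset.card_univ, Fintype.card_fin] at h0
    have hc0 : c = 0 := by
      rw [nsmul_eq_mul] at h0
      field_simp at h0
      simpa [hn0] using h0
    rw [Matrix.zero_apply, hcval i, hc0]
  -- S * Sp = 1 - J
  have hSSp : S * Sp = 1 - J := by
    have hQS : (1 - J - S * Sp) * S = 0 := by
      rw [sub_mul, sub_mul, one_mul, hJS, Matrix.mul_assoc, ← Matrix.mul_assoc S Sp S]
      rw [hs1]
      simp
    have hQsym : (1 - J - S * Sp)ᵀ = 1 - J - S * Sp := by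
      rw [transpose_sub, transpose_sub, transpose_one, hJsym, hs4]
    have hSQ : S * (1 - J - S * Sp) = 0 := by
      have := congrArg Matrix.transpose hQS
      rwa [transpose_mul, hQsym, hSsym, Matrix.transpose_zero] at this
    have hJQ : J * (1 - J - S * Sp) = 0 := by
      rw [mul_sub, mul_sub, mul_one, hJJ, ← Matrix.mul_assoc, hJS, Matrix.zero_mul]
      simp
    have h0 := key _ hSQ hJQ
    exact (sub_eq_zero.mp h0).symm
  -- Sp * S = 1 - J
  have hSpS : Sp * S = 1 - J := by
    have hSQ : S * (1 - J - Sp * S) = 0 := by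
      rw [mul_sub, mul_sub, mul_one, hSJ, ← Matrix.mul_assoc, hs1]
      simp
    have hQJ : (1 - J - Sp * S) * J = 0 := by
      rw [sub_mul, sub_mul, one_mul, hJJ, Matrix.mul_assoc, hSJ, Matrix.mul_zero]
      simp
    have hQsym : (1 - J - Sp * S)ᵀ = 1 - J - Sp * S := by
      rw [transpose_sub, transpose_sub, transpose_one, hJsym, hs3]
    have hJQ : J * (1 - J - Sp * S) = 0 := by
      have := congrArg Matrix.transpose hQJ
      rwa [transpose_mul, hQsym, hJsym, Matrix.transpose_zero] at this
    have h0 := key _ hSQ hJQ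
    exact (sub_eq_zero.mp h0).symm
  -- Sp * J = 0 and J * Sp = 0
  have hSpJ : Sp * J = 0 := by
    have h : Sp * (S * Sp) = Sp := by rw [← Matrix.mul_assoc]; exact hs2
    rw [hSSp, mul_sub, mul_one] at h
    have := sub_eq_self.mp h
    exact this
  have hJSp : J * Sp = 0 := by
    have h : (Sp * S) * Sp = Sp := hs2
    rw [hSpS, sub_mul, one_mul] at h
    exact sub_eq_self.mp h
  -- the candidate pseudoinverse
  set B : Matrix (Fin n) (Fin n) ℝ := (1 / 2 : ℝ) • (1 - J + (1 + M) * Sp * (1 + M)) with hB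
  have hAJ : (1 - M) * J = 0 := by rw [sub_mul, one_mul, hMJ, sub_self]
  have hJA : J * (1 - M) = 0 := by rw [mul_sub, mul_one, hJM, sub_self]
  have hACS : (1 - M) * (1 + M) = S := by rw [hS]; noncomm_ring
  have hCAS : (1 + M) * (1 - M) = S := by rw [hS]; noncomm_ring
  have hCJ : (1 + M) * J = J + J := by rw [add_mul, one_mul, hMJ]
  have hJC : J * (1 + M) = J + J := by rw [mul_add, mul_one, hJM]
  -- (1-M) * B = 1 - J
  have hAB : (1 - M) * B = 1 - J := by
    rw [hB, Matrix.mul_smul, mul_add, mul_sub, mul_one, hAJ, sub_zero,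
      ← Matrix.mul_assoc, ← Matrix.mul_assoc, hACS, hSSp]
    rw [sub_mul, one_mul, hJC]
    have : (1 - M) + (1 + M - (J + J)) = (2 : ℝ) • (1 - J) := by
      rw [two_smul]; abel
    rw [this, smul_smul]
    norm_num
  -- B * (1-M) = 1 - J
  have hBA : B * (1 - M) = 1 - J := by
    have hmid : (1 + M) * Sp * (1 + M) * (1 - M) = (1 + M) * (1 - J) := by
      rw [Matrix.mul_assoc ((1 + M) * Sp), hCAS, Matrix.mul_assoc, hSpS]
    rw [hB, Matrix.smul_mul, add_mul, sub_mul, one_mul, hJA, sub_zero, hmid]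
    rw [mul_sub, mul_one, hCJ]
    have : (1 - M) + (1 + M - (J + J)) = (2 : ℝ) • (1 - J) := by
      rw [two_smul]; abel
    rw [this, smul_smul]
    norm_num
  -- J * B = 0
  have hJB : J * B = 0 := by
    rw [hB, Matrix.mul_smul, mul_add, mul_sub, mul_one, hJJ, sub_self,
      ← Matrix.mul_assoc, ← Matrix.mul_assoc, hJC, add_mul, hJSp, add_zero,
      Matrix.zero_mul]
    simp
  -- Penrose conditions for B
  have pb1 : (1 - M) * B * (1 - M) = 1 - M := by
    rw [hAB, sub_mul, one_mul, hJA, sub_zero]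
  have pb2 : B * (1 - M) * B = B := by
    rw [hBA, sub_mul, one_mul, hJB, sub_zero]
  have pb3 : (B * (1 - M))ᵀ = B * (1 - M) := by
    rw [hBA, transpose_sub, transpose_one, hJsym]
  have pb4 : ((1 - M) * B)ᵀ = (1 - M) * B := by
    rw [hAB, transpose_sub, transpose_one, hJsym]
  exact mp_unique_aux (1 - M) Lp B hp1 hp2 hp3 hp4 pb1 pb2 pb3 pb4
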